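/- For every γ > 0, every u ∈ E and every ū ∈ T_γ(u), one has φ_γ(ū) ≤ φ_γ(u) − ((1 − γL)/(2γ))‖u − ū‖²; that is, one forward–backward step decreases the forward–backward envelope by at least (γ(1 − γL)/2)‖r‖² where r = (u − ū)/γ. -/

import Mathlib

open scoped RealInnerProductSpace
open Filter Topology Asymptotics

/-- Moreau envelope `g^γ(v) = inf_w { g(w) + (1/(2γ))‖w − v‖² }` of an
extended-real-valued function `g`. -/
noncomputable def moreauEnv {E : Type*} [NormedAddCommGroup E] [InnerProductSpace ℝ E]
    (g : E → EReal) (γ : ℝ) (v : E) : EReal :=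
  ⨅ w : E, g w + (((1 / (2 * γ)) * ‖w - v‖ ^ 2 : ℝ) : EReal)

/-- The (set-valued) proximal mapping
`prox_{γg}(v) = argmin_w { g(w) + (1/(2γ))‖w − v‖² }`. -/
def proxSet {E : Type*} [NormedAddCommGroup E] [InnerProductSpace ℝ E]
    (g : E → EReal) (γ : ℝ) (v : E) : Set E :=
  {w | ∀ w' : E, g w + (((1 / (2 * γ)) * ‖w - v‖ ^ 2 : ℝ) : EReal)
      ≤ g w' + (((1 / (2 * γ)) * ‖w' - v‖ ^ 2 : ℝ) : EReal)}

/-- The forward–backward envelope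
`φ_γ(u) = ℓ(u) − (γ/2)‖∇ℓ(u)‖² + g^γ(u − γ∇ℓ(u))`, where `l'` plays the role
of the gradient `∇ℓ`. -/
noncomputable def fbe {E : Type*} [NormedAddCommGroup E] [InnerProductSpace ℝ E]
    (l : E → ℝ) (l' : E → E) (g : E → EReal) (γ : ℝ) (u : E) : EReal :=
  ((l u - (γ / 2) * ‖l' u‖ ^ 2 : ℝ) : EReal) + moreauEnv g γ (u - γ • l' u)

theorem descent_lemma' {E : Type*} [NormedAddCommGroup E] [InnerProductSpace ℝ E]
    [CompleteSpace E]
    (l : E → ℝ) (l' : E → E) (L : ℝ)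
    (hgrad : ∀ x : E, HasGradientAt l (l' x) x)
    (hlip : ∀ x y : E, ‖l' x - l' y‖ ≤ L * ‖x - y‖)
    (u d : E) : l (u + d) ≤ l u + ⟪l' u, d⟫ + L / 2 * ‖d‖ ^ 2 := by
  set φ : ℝ → ℝ := fun t => l (u + t • d) - t * ⟪l' u, d⟫ - L / 2 * t ^ 2 * ‖d‖ ^ 2 with hφ
  have hderiv : ∀ t : ℝ, HasDerivAt φ (⟪l' (u + t • d), d⟫ - ⟪l' u, d⟫ - L * t * ‖d‖ ^ 2) t := by
    intro t
    have hc : HasDerivAt (fun t : ℝ => u + t • d) d t := by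
      simpa using ((hasDerivAt_id t).smul_const d).const_add u
    have h1 : HasDerivAt (fun t : ℝ => l (u + t • d)) ⟪l' (u + t • d), d⟫ t := by
      have := ((hgrad (u + t • d)).hasFDerivAt.comp_hasDerivAt t hc)
      exact this
    have h2 : HasDerivAt (fun t : ℝ => t * ⟪l' u, d⟫) ⟪l' u, d⟫ t := by
      simpa using (hasDerivAt_id t).mul_const (⟪l' u, d⟫)
    have h3 : HasDerivAt (fun t : ℝ => L / 2 * t ^ 2 * ‖d‖ ^ 2) (L * t * ‖d‖ ^ 2) t := by
      have := ((hasDerivAt_pow 2 t).const_mul (L / 2)).mul_const (‖d‖ ^ 2)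
      exact this.congr_deriv (by ring)
    exact (h1.sub h2).sub h3
  have hmono : AntitoneOn φ (Set.Icc 0 1) := by
    apply antitoneOn_of_deriv_nonpos (convex_Icc 0 1)
    · have : Differentiable ℝ φ := fun t => (hderiv t).differentiableAt
      exact this.continuous.continuousOn
    · intro t ht
      exact ((hderiv t).differentiableAt).differentiableWithinAt
    · intro t ht
      rw [interior_Icc] at ht
      rw [(hderiv t).deriv]
      have hb : ⟪l' (u + t • d) - l' u, d⟫ ≤ ‖l' (u + t • d) - l' u‖ * ‖d‖ :=
        real_inner_le_norm _ _
      have hb2 : ‖l' (u + t • d) - l' u‖ ≤ L * (t * ‖d‖) := by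
        have := hlip (u + t • d) u
        simpa [norm_smul, abs_of_pos ht.1, mul_assoc] using this
      have hd : ⟪l' (u + t • d), d⟫ - ⟪l' u, d⟫ = ⟪l' (u + t • d) - l' u, d⟫ := by
        rw [inner_sub_left]
      nlinarith [norm_nonneg d, norm_nonneg (l' (u + t • d) - l' u), ht.1.le]
  have := hmono (Set.mem_Icc.mpr ⟨le_refl 0, zero_le_one⟩)
    (Set.mem_Icc.mpr ⟨zero_le_one, le_refl 1⟩) zero_le_one
  simp only [hφ] at this
  simp only [zero_smul, one_smul, add_zero, zero_mul, zero_pow, mul_zero, sub_zero, one_mul,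
    one_pow, mul_one] at this
  linarith

/-- one forward–backward step decreases the FBE:
`φ_γ(ū) ≤ φ_γ(u) − ((1 − γL)/(2γ))‖u − ū‖²` for `ū ∈ T_γ(u)`. -/
theorem fbe_decrease_along_fb_step
    {E : Type*} [NormedAddCommGroup E] [InnerProductSpace ℝ E] [FiniteDimensional ℝ E]
    (l : E → ℝ) (l' : E → E) (g : E → EReal) (L γ : ℝ)
    (hL : 0 < L) (hγ : 0 < γ)
    (hgrad : ∀ x : E, HasGradientAt l (l' x) x)
    (hlip : ∀ x y : E, ‖l' x - l' y‖ ≤ L * ‖x - y‖)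
    (hproper : ∃ x : E, g x ≠ ⊤) (hbot : ∀ x : E, g x ≠ ⊥)
    (hlsc : LowerSemicontinuous g)
    (hbdd : ∃ m : ℝ, ∀ x : E, (m : EReal) ≤ g x)
    (u ub : E) (hub : ub ∈ proxSet g γ (u - γ • l' u)) :
    fbe l l' g γ ub ≤
      fbe l l' g γ u - ((((1 - γ * L) / (2 * γ)) * ‖u - ub‖ ^ 2 : ℝ) : EReal) := by
  set v : E := u - γ • l' u with hv
  -- g ub is finite
  have hub' : ∀ w' : E, g ub + (((1 / (2 * γ)) * ‖ub - v‖ ^ 2 : ℝ) : EReal)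
      ≤ g w' + (((1 / (2 * γ)) * ‖w' - v‖ ^ 2 : ℝ) : EReal) := hub
  have hnt : g ub ≠ ⊤ := by
    intro h
    obtain ⟨x0, hx0⟩ := hproper
    have h1 := hub' x0
    rw [h] at h1
    have h2 : (⊤ : EReal) + (((1 / (2 * γ)) * ‖ub - v‖ ^ 2 : ℝ) : EReal) = ⊤ := by
      exact EReal.top_add_of_ne_bot (EReal.coe_ne_bot _)
    rw [h2, top_le_iff] at h1
    exact (EReal.add_lt_top hx0 (EReal.coe_ne_top _)).ne h1
  set r : ℝ := (g ub).toReal with hrdef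
  have hr : g ub = (r : EReal) := (EReal.coe_toReal hnt (hbot ub)).symm
  set c₁ : ℝ := (1 / (2 * γ)) * ‖ub - v‖ ^ 2 with hc1def
  have hmor : moreauEnv g γ v = ((r + c₁ : ℝ) : EReal) := by
    apply le_antisymm
    · calc moreauEnv g γ v ≤ g ub + ((c₁ : ℝ) : EReal) := iInf_le _ ub
        _ = ((r + c₁ : ℝ) : EReal) := by rw [hr, ← EReal.coe_add]
    · apply le_iInf
      intro w
      calc ((r + c₁ : ℝ) : EReal) = g ub + ((c₁ : ℝ) : EReal) := by rw [hr, ← EReal.coe_add]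
        _ ≤ _ := hub' w
  have hfbeu : fbe l l' g γ u = ((l u - (γ / 2) * ‖l' u‖ ^ 2 + (r + c₁) : ℝ) : EReal) := by
    rw [fbe, ← hv, hmor, ← EReal.coe_add]
  set c₂ : ℝ := (1 / (2 * γ)) * ‖ub - (ub - γ • l' ub)‖ ^ 2 with hc2def
  have hfbeub : fbe l l' g γ ub ≤ ((l ub - (γ / 2) * ‖l' ub‖ ^ 2 + (r + c₂) : ℝ) : EReal) := by
    rw [fbe]
    calc _ ≤ ((l ub - (γ / 2) * ‖l' ub‖ ^ 2 : ℝ) : EReal) + (g ub + ((c₂ : ℝ) : EReal)) := by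
          exact add_le_add le_rfl (iInf_le _ ub)
      _ = _ := by rw [hr, ← EReal.coe_add, ← EReal.coe_add]
  rw [hfbeu, ← EReal.coe_sub]
  refine le_trans hfbeub (EReal.coe_le_coe_iff.mpr ?_)
  -- now a real inequality
  have hγ0 : γ ≠ 0 := ne_of_gt hγ
  have hc2 : c₂ = (γ / 2) * ‖l' ub‖ ^ 2 := by
    rw [hc2def]
    have : ub - (ub - γ • l' ub) = γ • l' ub := by abel
    rw [this, norm_smul]
    simp only [Real.norm_eq_abs, abs_of_pos hγ]
    field_simp
  have hc1 : c₁ = (1 / (2 * γ)) * ‖ub - u‖ ^ 2 + ⟪l' u, ub - u⟫ + (γ / 2) * ‖l' u‖ ^ 2 := by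
    rw [hc1def]
    have h1 : ub - v = (ub - u) + γ • l' u := by rw [hv]; abel
    rw [h1, norm_add_sq_real, real_inner_smul_right, norm_smul]
    simp only [Real.norm_eq_abs, abs_of_pos hγ]
    rw [real_inner_comm]
    field_simp
  have hdesc : l ub ≤ l u + ⟪l' u, ub - u⟫ + L / 2 * ‖ub - u‖ ^ 2 := by
    have := descent_lemma' l l' L hgrad hlip u (ub - u)
    simpa using this
  have hnr : ‖u - ub‖ = ‖ub - u‖ := norm_sub_rev _ _
  have hkey : (1 / (2 * γ)) * ‖ub - u‖ ^ 2 - ((1 - γ * L) / (2 * γ)) * ‖ub - u‖ ^ 2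
      = L / 2 * ‖ub - u‖ ^ 2 := by
    field_simp
    ring
  rw [hc1, hc2, hnr]
  linarith
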